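/- Let f : ℝ → ℝ^{1,n} be a piecewise C¹ curve from γ(0) = p to γ(1) = q with γ'(t) future-directed timelike for all t, and let F : ℝ^{1,n} → ℝ be a C¹ function whose Minkowski gradient ∇F (defined by g(∇F, v) = dF(v)) is everywhere past-directed timelike with g(∇F,∇F) ≤ -1. Then F(q) - F(p) ≥ ∫₀¹ sqrt(-g(γ'(t),γ'(t))) dt, i.e. F(q) - F(p) is at least the Lorentzian length of γ. -/

import Mathlib

open scoped BigOperators

/-- Minkowski bilinear form on `ℝ^{1,n}`: `g(v,w) = -v₀w₀ + Σᵢ vᵢwᵢ`. -/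
noncomputable def mink {n : ℕ} (v w : Fin (n+1) → ℝ) : ℝ :=
  -(v 0 * w 0) + ∑ i : Fin n, v i.succ * w i.succ

/-- future-directed timelike -/
def ftimelike {n : ℕ} (v : Fin (n+1) → ℝ) : Prop := mink v v < 0 ∧ 0 < v 0

private lemma rev_cs {A B U V : ℝ} (hA : 0 < A) (hB : 0 < B) (hU : 0 ≤ U) (hV : 0 ≤ V)
    (h1 : U ^ 2 + 1 ≤ A ^ 2) (h2 : V ^ 2 ≤ B ^ 2) :
    Real.sqrt (B ^ 2 - V ^ 2) ≤ A * B - U * V := by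
  have hUA : U ≤ A := by nlinarith
  have hVB : V ≤ B := by nlinarith
  have pos : 0 ≤ A * B - U * V := by nlinarith [mul_le_mul hUA hVB hV hA.le]
  have key : B ^ 2 - V ^ 2 ≤ (A * B - U * V) ^ 2 := by
    nlinarith [sq_nonneg (A * V - U * B), mul_nonneg (by nlinarith : (0:ℝ) ≤ A ^ 2 - U ^ 2 - 1)
      (by nlinarith : (0:ℝ) ≤ B ^ 2 - V ^ 2)]
  calc Real.sqrt (B ^ 2 - V ^ 2) ≤ Real.sqrt ((A * B - U * V) ^ 2) := Real.sqrt_le_sqrt key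
    _ = A * B - U * V := Real.sqrt_sq pos

/-- Reverse Cauchy–Schwarz pointwise inequality. -/
private lemma mink_key {n : ℕ} (u v : Fin (n+1) → ℝ) (hu : mink u u ≤ -1) (hu0 : u 0 < 0)
    (hv : mink v v < 0) (hv0 : 0 < v 0) : Real.sqrt (-(mink v v)) ≤ mink u v := by
  have e1 : mink u u = -(u 0) ^ 2 + ∑ i : Fin n, (u i.succ) ^ 2 := by
    simp [mink, sq]
  have e2 : mink v v = -(v 0) ^ 2 + ∑ i : Fin n, (v i.succ) ^ 2 := by
    simp [mink, sq]
  set P : ℝ := ∑ i : Fin n, u i.succ * v i.succ with hP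
  set U : ℝ := Real.sqrt (∑ i : Fin n, (u i.succ) ^ 2) with hUdef
  set V : ℝ := Real.sqrt (∑ i : Fin n, (v i.succ) ^ 2) with hVdef
  have hU : 0 ≤ U := Real.sqrt_nonneg _
  have hV : 0 ≤ V := Real.sqrt_nonneg _
  have hU2 : U ^ 2 = ∑ i : Fin n, (u i.succ) ^ 2 :=
    Real.sq_sqrt (Finset.sum_nonneg fun i _ => sq_nonneg _)
  have hV2 : V ^ 2 = ∑ i : Fin n, (v i.succ) ^ 2 :=
    Real.sq_sqrt (Finset.sum_nonneg fun i _ => sq_nonneg _)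
  have hcs : P ^ 2 ≤ U ^ 2 * V ^ 2 := by
    rw [hU2, hV2]
    exact Finset.sum_mul_sq_le_sq_mul_sq _ _ _
  have hPU : -(U * V) ≤ P := by nlinarith [mul_nonneg hU hV]
  have h1 : U ^ 2 + 1 ≤ (-(u 0)) ^ 2 := by
    have : U ^ 2 = mink u u + (u 0) ^ 2 := by rw [hU2, e1]; ring
    nlinarith
  have h2 : V ^ 2 ≤ (v 0) ^ 2 := by
    have : V ^ 2 = mink v v + (v 0) ^ 2 := by rw [hV2, e2]; ring
    nlinarith
  have hrc := rev_cs (A := -(u 0)) (B := v 0) (by linarith) hv0 hU hV h1 h2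
  have hmv : -(mink v v) = (v 0) ^ 2 - V ^ 2 := by rw [hV2, e2]; ring
  have hmuv : mink u v = -(u 0 * v 0) + P := rfl
  rw [hmv, hmuv]
  nlinarith

/-- FTC inequality with a finite exceptional set. -/
private lemma ftc_ineq (s : Finset ℝ) : ∀ (a b : ℝ) (g g' φ : ℝ → ℝ), a ≤ b →
    ContinuousOn g (Set.Icc a b) →
    (∀ x ∈ Set.Ioo a b \ (s : Set ℝ), HasDerivAt g (g' x) x) →
    MeasureTheory.IntegrableOn φ (Set.Icc a b) →
    (∀ x ∈ Set.Ioo a b \ (s : Set ℝ), φ x ≤ g' x) →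
    (∫ y in a..b, φ y) ≤ g b - g a := by
  induction s using Finset.induction with
  | empty =>
    intro a b g g' φ hab hcont hd hi hφ
    exact intervalIntegral.integral_le_sub_of_hasDeriv_right_of_le hab hcont
      (fun x hx => (hd x ⟨hx, by simp⟩).hasDerivWithinAt) hi (fun x hx => hφ x ⟨hx, by simp⟩)
  | @insert c s' hc ih =>
    intro a b g g' φ hab hcont hd hi hφ
    by_cases hmem : c ∈ Set.Ioo a b
    · have hac : a ≤ c := hmem.1.le
      have hcb : c ≤ b := hmem.2.le
      have sub1 : Set.Ioo a c \ (s' : Set ℝ) ⊆ Set.Ioo a b \ ((insert c s' : Finset ℝ) : Set ℝ) := by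
        rintro x ⟨hx, hxs⟩
        refine ⟨⟨hx.1, hx.2.trans hmem.2⟩, ?_⟩
        simp only [Finset.coe_insert, Set.mem_insert_iff]
        push_neg
        exact ⟨ne_of_lt hx.2, hxs⟩
      have sub2 : Set.Ioo c b \ (s' : Set ℝ) ⊆ Set.Ioo a b \ ((insert c s' : Finset ℝ) : Set ℝ) := by
        rintro x ⟨hx, hxs⟩
        refine ⟨⟨hmem.1.trans hx.1, hx.2⟩, ?_⟩
        simp only [Finset.coe_insert, Set.mem_insert_iff]
        push_neg
        exact ⟨(ne_of_lt hx.1).symm, hxs⟩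
      have i1 : MeasureTheory.IntegrableOn φ (Set.Icc a c) :=
        hi.mono_set (Set.Icc_subset_Icc le_rfl hcb)
      have i2 : MeasureTheory.IntegrableOn φ (Set.Icc c b) :=
        hi.mono_set (Set.Icc_subset_Icc hac le_rfl)
      have h1 := ih a c g g' φ hac (hcont.mono (Set.Icc_subset_Icc le_rfl hcb))
        (fun x hx => hd x (sub1 hx)) i1 (fun x hx => hφ x (sub1 hx))
      have h2 := ih c b g g' φ hcb (hcont.mono (Set.Icc_subset_Icc hac le_rfl))
        (fun x hx => hd x (sub2 hx)) i2 (fun x hx => hφ x (sub2 hx))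
      have ii1 : IntervalIntegrable φ MeasureTheory.volume a c :=
        (intervalIntegrable_iff_integrableOn_Icc_of_le hac).mpr i1
      have ii2 : IntervalIntegrable φ MeasureTheory.volume c b :=
        (intervalIntegrable_iff_integrableOn_Icc_of_le hcb).mpr i2
      have := intervalIntegral.integral_add_adjacent_intervals ii1 ii2
      linarith [this]
    · refine ih a b g g' φ hab hcont (fun x hx => hd x ?_) hi (fun x hx => hφ x ?_) <;>
      · refine ⟨hx.1, ?_⟩
        simp only [Finset.coe_insert, Set.mem_insert_iff]
        push_neg
        exact ⟨fun h => hmem (h ▸ hx.1), hx.2⟩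

/-- Along a piecewise C¹ future-directed timelike curve, a C¹ function whose
Minkowski gradient is everywhere past-directed timelike with `g(∇F,∇F) ≤ -1`
increases at least by the Lorentzian length of the curve. -/
theorem increase_ge_length {n : ℕ} (γ γ' : ℝ → Fin (n+1) → ℝ) (s : Finset ℝ)
    (hγc : ContinuousOn γ (Set.Icc 0 1))
    (hder : ∀ t ∈ Set.Icc (0:ℝ) 1 \ (s : Set ℝ), HasDerivAt γ (γ' t) t)
    (htl : ∀ t ∈ Set.Icc (0:ℝ) 1 \ (s : Set ℝ), ftimelike (γ' t))
    (hint : IntervalIntegrable (fun t => Real.sqrt (-(mink (γ' t) (γ' t))))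
      MeasureTheory.volume 0 1)
    (F : (Fin (n+1) → ℝ) → ℝ) (hF : ContDiff ℝ 1 F)
    (G : (Fin (n+1) → ℝ) → (Fin (n+1) → ℝ))
    (hG : ∀ x v, mink (G x) v = fderiv ℝ F x v)
    (hGeik : ∀ x, mink (G x) (G x) ≤ -1) (hGpast : ∀ x, G x 0 < 0)
    (p q : Fin (n+1) → ℝ) (hp : γ 0 = p) (hq : γ 1 = q) :
    F q - F p ≥ ∫ t in (0:ℝ)..1, Real.sqrt (-(mink (γ' t) (γ' t))) := by
  subst hp hq
  have key := ftc_ineq s 0 1 (fun t => F (γ t)) (fun t => mink (G (γ t)) (γ' t))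
    (fun t => Real.sqrt (-(mink (γ' t) (γ' t)))) (by norm_num)
    (hF.continuous.comp_continuousOn hγc)
    (fun x hx => by
      have hx' : x ∈ Set.Icc (0:ℝ) 1 \ (s : Set ℝ) := ⟨Set.Ioo_subset_Icc_self hx.1, hx.2⟩
      have hFd : HasFDerivAt F (fderiv ℝ F (γ x)) (γ x) :=
        (hF.differentiable one_ne_zero (γ x)).hasFDerivAt
      have := hFd.comp_hasDerivAt x (hder x hx')
      rwa [← hG] at this)
    ((intervalIntegrable_iff_integrableOn_Icc_of_le (by norm_num)).mp hint)
    (fun x hx => by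
      have hx' : x ∈ Set.Icc (0:ℝ) 1 \ (s : Set ℝ) := ⟨Set.Ioo_subset_Icc_self hx.1, hx.2⟩
      obtain ⟨hvv, hv0⟩ := htl x hx'
      exact mink_key (G (γ x)) (γ' x) (hGeik (γ x)) (hGpast (γ x)) hvv hv0)
  exact key
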